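/- Let u be a positive solution of the perturbed Kirchhoff equation −(ε²a + εb∫_{ℝ³}|∇u|²)Δu + V(x)u = u^p in ℝ³, and let Ω ⊂ ℝ³ be a bounded smooth domain with unit outward normal ν = (ν₁, ν₂, ν₃). Then for each i = 1,2,3, the local Pohozaev identity holds: ∫_Ω (∂V/∂x_i) u² = (ε²a + εb∫_{ℝ³}|∇u|²) ∫_{∂Ω} (|∇u|²ν_i − 2 (∂u/∂ν)(∂u/∂x_i)) + ∫_{∂Ω} V u² ν_i − (2/(p+1)) ∫_{∂Ω} u^{p+1} ν_i. -/

import Mathlib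

open MeasureTheory Filter Asymptotics Metric
open scoped Topology ENNReal

noncomputable section

abbrev E3 : Type := EuclideanSpace ℝ (Fin 3)

/-- The Laplacian of `u`, as the sum of second partial derivatives. -/
noncomputable def lap (u : E3 → ℝ) (x : E3) : ℝ :=
  ∑ i : Fin 3, iteratedFDeriv ℝ 2 u x (fun _ => EuclideanSpace.single i (1 : ℝ))

/-- `∫ ∇u · ∇v`. -/
noncomputable def gradIP (u v : E3 → ℝ) : ℝ :=
  ∫ x : E3, (inner ℝ (gradient u x) (gradient v x) : ℝ)

/-- `∫ |∇u|²`. -/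
noncomputable def gradSq (u : E3 → ℝ) : ℝ :=
  ∫ x : E3, ‖gradient u x‖ ^ 2

/-- Membership in `H¹(ℝ³)`: the function and its gradient are in `L²`. -/
def InH1 (u : E3 → ℝ) : Prop :=
  MemLp u 2 (volume : Measure E3) ∧ MemLp (fun x => gradient u x) 2 (volume : Measure E3)

/-- Radial function. -/
def IsRadial (u : E3 → ℝ) : Prop := ∀ x y : E3, ‖x‖ = ‖y‖ → u x = u y

/-- `u` is a positive `H¹` solution of `-(a + b ∫|∇u|²) Δu + u = u^p` in `ℝ³`. -/
def SolvesKirchhoff (a b p : ℝ) (u : E3 → ℝ) : Prop :=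
  ContDiff ℝ 2 u ∧ InH1 u ∧ (∀ x, 0 < u x) ∧
    ∀ x, -(a + b * gradSq u) * lap u x + u x = u x ^ p

/-- `Q` is a positive `H¹` solution of `-ΔQ + Q = Q^p` in `ℝ³`. -/
def SolvesNLS (p : ℝ) (Q : E3 → ℝ) : Prop :=
  ContDiff ℝ 2 Q ∧ InH1 Q ∧ (∀ x, 0 < Q x) ∧
    ∀ x, -lap Q x + Q x = Q x ^ p

/-- Assumption (V1): `V` is bounded, continuous, with positive infimum. -/
def V1cond (V : E3 → ℝ) : Prop :=
  Continuous V ∧ (∃ M, ∀ x, |V x| ≤ M) ∧ ∃ c > (0 : ℝ), ∀ x, c ≤ V x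

/-- Assumption (V2), normalized with `x₀ = 0`, `r₀ = 10`, `V(x₀) = 1`:
`0` is a strict local minimum point and `V` is `α`-Hölder continuous on `B̄₁₀(0)`. -/
def V2cond (V : E3 → ℝ) (α : ℝ) : Prop :=
  0 < α ∧ α < 1 ∧ V 0 = 1 ∧ (∀ x : E3, 0 < ‖x‖ → ‖x‖ < 10 → V 0 < V x) ∧
    ∃ C, ∀ x ∈ Metric.closedBall (0 : E3) 10, ∀ y ∈ Metric.closedBall (0 : E3) 10,
      |V x - V y| ≤ C * ‖x - y‖ ^ α

/-- Assumption (V3), normalized with `x₀ = 0`: `V ∈ C¹` with the local expansions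
`V(x) = V(0) + ∑ cᵢ|xᵢ|^m + O(|x|^(m+1))` and
`∂V/∂xᵢ = m cᵢ |xᵢ|^(m-2) xᵢ + O(|x|^m)` on `B_δ(0)`. -/
def V3cond (V : E3 → ℝ) (m δ : ℝ) (c : Fin 3 → ℝ) : Prop :=
  ContDiff ℝ 1 V ∧ 1 < m ∧ 0 < δ ∧ (∀ i, c i ≠ 0) ∧
    ∃ C, ∀ x ∈ Metric.ball (0 : E3) δ,
      |V x - V 0 - ∑ i : Fin 3, c i * |x i| ^ m| ≤ C * ‖x‖ ^ (m + 1) ∧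
      ∀ i : Fin 3,
        |fderiv ℝ V x (EuclideanSpace.single i 1) - m * c i * |x i| ^ (m - 2) * x i|
          ≤ C * ‖x‖ ^ m

/-- The inner product `⟨u,v⟩_ε = ∫ (ε²a ∇u·∇v + V u v)`. -/
noncomputable def innerEps (a : ℝ) (V : E3 → ℝ) (ε : ℝ) (u v : E3 → ℝ) : ℝ :=
  ∫ x : E3, (ε ^ 2 * a * (inner ℝ (gradient u x) (gradient v x) : ℝ) + V x * u x * v x)

/-- The norm `‖u‖_ε`. -/
noncomputable def normEps (a : ℝ) (V : E3 → ℝ) (ε : ℝ) (u : E3 → ℝ) : ℝ :=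
  Real.sqrt (innerEps a V ε u u)

/-- `u` is a positive solution of the perturbed Kirchhoff problem
`-(ε²a + εb ∫|∇u|²) Δu + V u = u^p` in `ℝ³`. -/
def SolvesPerturbed (a b p ε : ℝ) (V : E3 → ℝ) (u : E3 → ℝ) : Prop :=
  ContDiff ℝ 2 u ∧ InH1 u ∧ (∀ x, 0 < u x) ∧
    ∀ x, -(ε ^ 2 * a + ε * b * gradSq u) * lap u x + V x * u x = u x ^ p

/-- `U_{ε,y}(x) = U((x - y)/ε)`. -/
noncomputable def Uey (U : E3 → ℝ) (ε : ℝ) (y : E3) : E3 → ℝ :=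
  fun x => U (ε⁻¹ • (x - y))

/-- The divergence of a vector field `F : ℝ³ → ℝ³`. -/
noncomputable def divg (F : E3 → E3) (x : E3) : ℝ :=
  ∑ i : Fin 3, fderiv ℝ (fun y => F y i) x (EuclideanSpace.single i 1)


section AuxPohozaev

lemma aux_grad_coord (f : E3 → ℝ) (x : E3) (i : Fin 3) :
    gradient f x i = fderiv ℝ f x (EuclideanSpace.single i 1) := by
  have h : (inner ℝ (gradient f x) (EuclideanSpace.single i (1:ℝ)) : ℝ)
      = fderiv ℝ f x (EuclideanSpace.single i 1) := by
    simp [gradient, InnerProductSpace.toDual_symm_apply]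
  rw [EuclideanSpace.inner_single_right] at h
  simpa using h

lemma aux_divg_smul_single (f : E3 → ℝ) (i : Fin 3) (x : E3) :
    divg (fun y => f y • EuclideanSpace.single i (1:ℝ)) x
      = fderiv ℝ f x (EuclideanSpace.single i 1) := by
  unfold divg
  rw [Finset.sum_eq_single i]
  · have h : (fun y => (f y • EuclideanSpace.single i (1:ℝ)) i) = f := by
      funext y
      show f y * (EuclideanSpace.single i (1:ℝ)) i = f y
      simp [EuclideanSpace.single_apply]
    rw [h]
  · intro j _ hji
    have h : (fun y => (f y • EuclideanSpace.single i (1:ℝ)) j) = fun _ => (0:ℝ) := by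
      funext y
      show f y * (EuclideanSpace.single i (1:ℝ)) j = 0
      simp [EuclideanSpace.single_apply, hji]
    rw [h]; simp
  · simp

lemma aux_divg_F1 (u : E3 → ℝ) (hu2 : ContDiff ℝ 2 u) (i : Fin 3) (x : E3) :
    divg (fun y => ‖gradient u y‖ ^ 2 • EuclideanSpace.single i (1:ℝ)
        - (2 * fderiv ℝ u y (EuclideanSpace.single i 1)) • gradient u y) x
      = -2 * fderiv ℝ u x (EuclideanSpace.single i 1) * lap u x := by
  set g : Fin 3 → E3 → ℝ := fun j y => fderiv ℝ u y (EuclideanSpace.single j 1) with hgdef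
  set D2 : E3 → (E3 →L[ℝ] E3 →L[ℝ] ℝ) := fun y => fderiv ℝ (fderiv ℝ u) y with hD2def
  have hd1 : ContDiff ℝ 1 (fderiv ℝ u) := hu2.fderiv_right (by norm_num)
  have hg : ∀ (j : Fin 3) (y : E3),
      HasFDerivAt (g j) ((D2 y).flip (EuclideanSpace.single j 1)) y := by
    intro j y
    have h := ((hd1.differentiable one_ne_zero y).hasFDerivAt).clm_apply
      (hasFDerivAt_const (EuclideanSpace.single j (1:ℝ)) y)
    simpa using h
  have hsymm : ∀ v w, D2 x v w = D2 x w v := fun v w =>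
    second_derivative_symmetric (fun y => (hu2.differentiable two_ne_zero y).hasFDerivAt)
      ((hd1.differentiable one_ne_zero x).hasFDerivAt) v w
  have hlap : lap u x = ∑ j : Fin 3,
      D2 x (EuclideanSpace.single j 1) (EuclideanSpace.single j 1) := by
    unfold lap; congr 1; funext j; rw [iteratedFDeriv_two_apply]
  have hcompfun : ∀ j : Fin 3,
      (fun y => (‖gradient u y‖ ^ 2 • EuclideanSpace.single i (1:ℝ)
        - (2 * fderiv ℝ u y (EuclideanSpace.single i 1)) • gradient u y) j)
      = fun y => (if j = i then (1:ℝ) else 0) * (∑ k : Fin 3, g k y * g k y)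
          - (2 * g i y) * g j y := by
    intro j; funext y
    show ‖gradient u y‖ ^ 2 * (EuclideanSpace.single i (1:ℝ)) j
        - (2 * fderiv ℝ u y (EuclideanSpace.single i 1)) * gradient u y j = _
    have hn : ‖gradient u y‖ ^ 2 = ∑ k : Fin 3, g k y * g k y := by
      rw [← real_inner_self_eq_norm_sq]
      rw [PiLp.inner_apply]; simp [hgdef, aux_grad_coord, sq]
    rw [hn, aux_grad_coord]
    by_cases h : j = i <;> simp [EuclideanSpace.single_apply, h] <;> ring
  have hcomp : ∀ j : Fin 3,
      fderiv ℝ (fun y => (‖gradient u y‖ ^ 2 • EuclideanSpace.single i (1:ℝ)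
        - (2 * fderiv ℝ u y (EuclideanSpace.single i 1)) • gradient u y) j) x
        (EuclideanSpace.single j 1)
      = (if j = i then ∑ k : Fin 3,
            2 * g k x * D2 x (EuclideanSpace.single j 1) (EuclideanSpace.single k 1) else 0)
        - (2 * g i x * D2 x (EuclideanSpace.single j 1) (EuclideanSpace.single j 1)
            + 2 * g j x * D2 x (EuclideanSpace.single j 1) (EuclideanSpace.single i 1)) := by
    intro j
    rw [hcompfun j]
    have hsum : HasFDerivAt (fun y => ∑ k : Fin 3, g k y * g k y)
        (∑ k : Fin 3, (g k x • ((D2 x).flip (EuclideanSpace.single k 1))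
          + g k x • ((D2 x).flip (EuclideanSpace.single k 1)))) x :=
      HasFDerivAt.fun_sum (fun k _ => (hg k x).fun_mul (hg k x))
    have hA := hsum.const_mul (if j = i then (1:ℝ) else 0)
    have hB := (((hg i x).const_mul 2).fun_mul (hg j x))
    have h := (hA.fun_sub hB).fderiv
    rw [h]
    simp [ContinuousLinearMap.sub_apply, ContinuousLinearMap.add_apply,
      ContinuousLinearMap.smul_apply, ContinuousLinearMap.coe_sum', Finset.sum_apply,
      ContinuousLinearMap.flip_apply, smul_eq_mul, Finset.mul_sum]
    by_cases h' : j = i <;> simp [h'] <;> [skip; ring]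
    rw [Finset.sum_congr rfl (fun k (_ : k ∈ Finset.univ) =>
      show g k x * ((D2 x) (EuclideanSpace.single i 1)) (EuclideanSpace.single k 1)
          + g k x * ((D2 x) (EuclideanSpace.single i 1)) (EuclideanSpace.single k 1)
        = 2 * g k x * ((D2 x) (EuclideanSpace.single i 1)) (EuclideanSpace.single k 1)
        from by ring)]
    ring
  unfold divg
  rw [Finset.sum_congr rfl (fun j _ => hcomp j)]
  rw [Finset.sum_sub_distrib, Finset.sum_ite_eq' Finset.univ i]
  simp only [Finset.mem_univ, if_true, Finset.sum_add_distrib]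
  have h1 : ∑ k : Fin 3, 2 * g k x * D2 x (EuclideanSpace.single i 1) (EuclideanSpace.single k 1)
      = ∑ k : Fin 3, 2 * g k x * D2 x (EuclideanSpace.single k 1) (EuclideanSpace.single i 1) := by
    congr 1; funext k; rw [hsymm]
  rw [h1, hlap, Finset.mul_sum]
  have hk : ∀ A B : ℝ, A - (B + A) = -B := fun A B => by ring
  rw [hk, ← Finset.sum_neg_distrib]
  exact Finset.sum_congr rfl fun j _ => by simp only [hgdef]; ring

lemma aux_integrableOn {f : E3 → ℝ} (hf : Continuous f) {Ω : Set E3}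
    (hb : Bornology.IsBounded Ω) : IntegrableOn f Ω := by
  exact ((hf.continuousOn).integrableOn_compact hb.isCompact_closure).mono_set subset_closure

lemma aux_lap_cont (u : E3 → ℝ) (hu2 : ContDiff ℝ 2 u) : Continuous (lap u) := by
  have hd1 : ContDiff ℝ 1 (fderiv ℝ u) := hu2.fderiv_right (by norm_num)
  have h : lap u = fun x => ∑ j : Fin 3,
      fderiv ℝ (fderiv ℝ u) x (EuclideanSpace.single j 1) (EuclideanSpace.single j 1) := by
    funext x; unfold lap; congr 1; funext j; rw [iteratedFDeriv_two_apply]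
  rw [h]
  exact continuous_finset_sum _ fun j _ =>
    ((hd1.continuous_fderiv one_ne_zero).clm_apply continuous_const).clm_apply continuous_const

end AuxPohozaev

theorem statement16 (a b p ε : ℝ) (ha : 0 < a) (hb : 0 < b) (hp1 : 1 < p) (hp5 : p < 5)
    (hε : 0 < ε)
    (V : E3 → ℝ) (hVC1 : ContDiff ℝ 1 V) (hVbdd : ∃ M, ∀ x, |V x| ≤ M)
    (u : E3 → ℝ) (hu : SolvesPerturbed a b p ε V u)
    (Ω : Set E3) (hΩo : IsOpen Ω) (hΩb : Bornology.IsBounded Ω)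
    -- `σ` is the surface measure on `∂Ω` and `ν` the unit outward normal, characterized
    -- by the divergence theorem on the bounded smooth domain `Ω`
    (σ : Measure E3) (ν : E3 → E3)
    (hσ : ∀ s : Set E3, σ s = σ (s ∩ frontier Ω))
    (hν : ∀ x ∈ frontier Ω, ‖ν x‖ = 1)
    (hdiv : ∀ F : E3 → E3, ContDiff ℝ 1 F →
      (∫ x in Ω, divg F x) = ∫ x, (inner ℝ (F x) (ν x) : ℝ) ∂σ) :
    ∀ i : Fin 3,
      (∫ x in Ω, fderiv ℝ V x (EuclideanSpace.single i 1) * u x ^ 2)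
        = (ε ^ 2 * a + ε * b * gradSq u)
            * (∫ x, (‖gradient u x‖ ^ 2 * ν x i
                - 2 * (inner ℝ (gradient u x) (ν x) : ℝ) * gradient u x i) ∂σ)
          + (∫ x, V x * u x ^ 2 * ν x i ∂σ)
          - (2 / (p + 1)) * ∫ x, u x ^ (p + 1) * ν x i ∂σ := by
  intro i
  obtain ⟨hu2, -, hupos, hPDE⟩ := hu
  have hu1 : ContDiff ℝ 1 u := hu2.of_le one_le_two
  have hd1 : ContDiff ℝ 1 (fderiv ℝ u) := hu2.fderiv_right (by norm_num)
  have hpne : p + 1 ≠ 0 := by linarith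
  set k : ℝ := ε ^ 2 * a + ε * b * gradSq u with hk
  set gi : E3 → ℝ := fun x => fderiv ℝ u x (EuclideanSpace.single i 1) with hgi
  set F1 : E3 → E3 := fun y => ‖gradient u y‖ ^ 2 • EuclideanSpace.single i (1:ℝ)
      - (2 * fderiv ℝ u y (EuclideanSpace.single i 1)) • gradient u y with hF1
  set F2 : E3 → E3 := fun y => (V y * u y ^ 2) • EuclideanSpace.single i (1:ℝ) with hF2
  set F3 : E3 → E3 := fun y => (u y ^ (p + 1)) • EuclideanSpace.single i (1:ℝ) with hF3
  have hgradcd : ContDiff ℝ 1 (fun x => gradient u x) := by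
    have h : (fun x => gradient u x)
        = fun x => (InnerProductSpace.toDual ℝ E3).symm (fderiv ℝ u x) := rfl
    rw [h]
    exact (InnerProductSpace.toDual ℝ E3).symm.contDiff.comp hd1
  have hgicd : ContDiff ℝ 1 gi := hd1.clm_apply contDiff_const
  have hF1cd : ContDiff ℝ 1 F1 :=
    ((hgradcd.norm_sq (𝕜 := ℝ)).smul contDiff_const).sub ((contDiff_const.mul hgicd).smul hgradcd)
  have hF2cd : ContDiff ℝ 1 F2 := (hVC1.mul (hu1.pow 2)).smul contDiff_const
  have hF3cd : ContDiff ℝ 1 F3 := contDiff_iff_contDiffAt.2 fun x =>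
    ((hu1.contDiffAt).rpow_const_of_ne (hupos x).ne').smul contDiffAt_const
  -- boundary integrals
  have e1 : (∫ x in Ω, divg F1 x) = ∫ x, (‖gradient u x‖ ^ 2 * ν x i
      - 2 * (inner ℝ (gradient u x) (ν x) : ℝ) * gradient u x i) ∂σ := by
    rw [hdiv F1 hF1cd]
    congr 1; funext x
    simp only [hF1, inner_sub_left, real_inner_smul_left,
      EuclideanSpace.inner_single_left, conj_trivial, ← aux_grad_coord]
    ring
  have e2 : (∫ x in Ω, divg F2 x) = ∫ x, V x * u x ^ 2 * ν x i ∂σ := by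
    rw [hdiv F2 hF2cd]
    congr 1; funext x
    simp only [hF2, real_inner_smul_left, EuclideanSpace.inner_single_left, conj_trivial]
    ring
  have e3 : (∫ x in Ω, divg F3 x) = ∫ x, u x ^ (p + 1) * ν x i ∂σ := by
    rw [hdiv F3 hF3cd]
    congr 1; funext x
    simp only [hF3, real_inner_smul_left, EuclideanSpace.inner_single_left, conj_trivial]
    ring
  -- divergence formulas
  have d1 : ∀ x, divg F1 x = -2 * gi x * lap u x := fun x => aux_divg_F1 u hu2 i x
  have d2 : ∀ x, divg F2 x = fderiv ℝ V x (EuclideanSpace.single i 1) * u x ^ 2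
      + V x * (2 * u x * gi x) := by
    intro x
    rw [hF2, aux_divg_smul_single]
    have hmm : (fun y => V y * u y ^ 2) = fun y => V y * (u y * u y) := by
      funext y; ring
    rw [hmm]
    have hDu := (hu1.differentiable one_ne_zero x).hasFDerivAt
    have h := ((hVC1.differentiable one_ne_zero x).hasFDerivAt.fun_mul (hDu.fun_mul hDu)).fderiv
    rw [h]
    simp only [ContinuousLinearMap.add_apply, ContinuousLinearMap.smul_apply, smul_eq_mul,
      ContinuousLinearMap.coe_smul', Pi.smul_apply]
    rw [hgi]; ring
  have d3 : ∀ x, divg F3 x = (p + 1) * u x ^ p * gi x := by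
    intro x
    rw [hF3, aux_divg_smul_single]
    have h := ((hu1.differentiable one_ne_zero x).hasFDerivAt.rpow_const (p := p + 1)
      (Or.inl (hupos x).ne')).fderiv
    rw [h]
    simp only [ContinuousLinearMap.coe_smul', Pi.smul_apply, smul_eq_mul]
    rw [show p + 1 - 1 = p from by ring, hgi]
  -- integrability
  have hI1 : IntegrableOn (fun x => -2 * gi x * lap u x) Ω volume :=
    aux_integrableOn (((continuous_const.mul hgicd.continuous).mul
      (aux_lap_cont u hu2))) hΩb
  have hI2 : IntegrableOn (fun x => fderiv ℝ V x (EuclideanSpace.single i 1) * u x ^ 2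
      + V x * (2 * u x * gi x)) Ω volume :=
    aux_integrableOn ((((hVC1.continuous_fderiv one_ne_zero).clm_apply continuous_const).mul
      (hu1.continuous.pow 2)).add (hVC1.continuous.mul
        ((continuous_const.mul hu1.continuous).mul hgicd.continuous))) hΩb
  have hI3 : IntegrableOn (fun x => (p + 1) * u x ^ p * gi x) Ω volume :=
    aux_integrableOn ((continuous_const.mul
      (hu1.continuous.rpow_const fun x => Or.inl (hupos x).ne')).mul hgicd.continuous) hΩb
  have hsplit : (∫ x in Ω, (k * (-2 * gi x * lap u x)
        + (fderiv ℝ V x (EuclideanSpace.single i 1) * u x ^ 2 + V x * (2 * u x * gi x))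
        - 2 / (p + 1) * ((p + 1) * u x ^ p * gi x)))
      = k * (∫ x in Ω, -2 * gi x * lap u x)
        + (∫ x in Ω, fderiv ℝ V x (EuclideanSpace.single i 1) * u x ^ 2
            + V x * (2 * u x * gi x))
        - 2 / (p + 1) * ∫ x in Ω, (p + 1) * u x ^ p * gi x := by
    have h1 : IntegrableOn (fun x => k * (-2 * gi x * lap u x)) Ω volume := hI1.const_mul k
    have h2 : IntegrableOn (fun x => k * (-2 * gi x * lap u x)
        + (fderiv ℝ V x (EuclideanSpace.single i 1) * u x ^ 2 + V x * (2 * u x * gi x)))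
        Ω volume := h1.add hI2
    have h3 : IntegrableOn (fun x => 2 / (p + 1) * ((p + 1) * u x ^ p * gi x)) Ω volume :=
      hI3.const_mul (2 / (p + 1))
    rw [integral_sub h2 h3, integral_add h1 hI2, integral_const_mul, integral_const_mul]
  rw [← e1, ← e2, ← e3]
  simp only [d1, d2, d3]
  rw [← hsplit]
  refine integral_congr_ae (Filter.Eventually.of_forall fun x => ?_)
  dsimp only
  have hc : 2 / (p + 1) * ((p + 1) * u x ^ p * gi x) = 2 * u x ^ p * gi x := by
    field_simp
  rw [hc]
  linear_combination (-2 * gi x) * hPDE x
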